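/- For every integer n ≥ 2, the limit as m → ∞ of ( n·(C(m+n−2, n−1) + C(m+n−1, n−1)) + C(2m+n−2, n−1) + 1 ) / ( C(m+n−1, n−1) + n ) equals 2n + 2^{n−1}. -/

import Mathlib

open Filter Finset

private lemma asc_cast (N K : ℕ) :
    ((N.ascFactorial K : ℕ) : ℝ) = ∏ i ∈ Finset.range K, ((N : ℝ) + i) := by
  induction K with
  | zero => simp
  | succ k ih =>
    rw [Finset.prod_range_succ, ← ih, Nat.ascFactorial_succ]
    push_cast
    ring

private lemma choose_cast (N K : ℕ) :
    ((Nat.choose (N + K) K : ℕ) : ℝ) * (K.factorial : ℝ)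
      = ∏ i ∈ Finset.range K, ((N : ℝ) + 1 + i) := by
  have h := Nat.ascFactorial_eq_factorial_mul_choose N K
  have : (((N + 1).ascFactorial K : ℕ) : ℝ) = (K.factorial : ℝ) * (Nat.choose (N + K) K : ℝ) := by
    exact_mod_cast congrArg (Nat.cast : ℕ → ℝ) h
  rw [asc_cast] at this
  rw [mul_comm, ← this]
  push_cast
  ring_nf

private lemma ratLim (a b c : ℝ) (hc : 0 < c) :
    Tendsto (fun m : ℕ => (a * m + b) / ((m : ℝ) + c)) atTop (nhds a) := by
  have h1 : Tendsto (fun m : ℕ => ((m : ℝ) + c)) atTop atTop :=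
    tendsto_atTop_add_const_right atTop c tendsto_natCast_atTop_atTop
  have h2 : Tendsto (fun m : ℕ => (b - a * c) / ((m : ℝ) + c)) atTop (nhds 0) :=
    Tendsto.div_atTop tendsto_const_nhds h1
  have h3 : Tendsto (fun m : ℕ => a + (b - a * c) / ((m : ℝ) + c)) atTop (nhds a) := by
    simpa using h2.const_add a
  refine h3.congr fun m => ?_
  have hm : (m : ℝ) + c ≠ 0 := by positivity
  field_simp
  ring

/-- `lim_{m→∞} ( n(C(m+n−2,n−1)+C(m+n−1,n−1)) + C(2m+n−2,n−1) + 1 ) / ( C(m+n−1,n−1) + n )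
    = 2n + 2^{n−1}` for `n ≥ 2`. -/
theorem stmt_11 (n : ℕ) (hn : 2 ≤ n) :
    Tendsto (fun m : ℕ =>
        ((n * (Nat.choose (m + n - 2) (n - 1) + Nat.choose (m + n - 1) (n - 1))
            + Nat.choose (2 * m + n - 2) (n - 1) + 1 : ℕ) : ℝ)
          / ((Nat.choose (m + n - 1) (n - 1) + n : ℕ) : ℝ))
      atTop (nhds ((2 * n : ℝ) + 2 ^ (n - 1))) := by
  obtain ⟨j, rfl⟩ : ∃ j, n = j + 2 := ⟨n - 2, by omega⟩
  set K := j + 1 with hK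
  -- limits of the three pieces
  have hQ1 : Tendsto (fun m : ℕ => ∏ i ∈ Finset.range K,
      (((m : ℝ) + i) / ((m : ℝ) + 1 + i))) atTop (nhds 1) := by
    have : Tendsto (fun m : ℕ => ∏ i ∈ Finset.range K,
        (((m : ℝ) + i) / ((m : ℝ) + 1 + i))) atTop (nhds (∏ _i ∈ Finset.range K, (1 : ℝ))) := by
      refine tendsto_finset_prod _ fun i _ => ?_
      have := ratLim 1 (i : ℝ) (1 + i) (by positivity)
      refine this.congr fun m => ?_
      ring_nf
    simpa using this
  have hQ3 : Tendsto (fun m : ℕ => ∏ i ∈ Finset.range K,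
      ((2 * (m : ℝ) + i) / ((m : ℝ) + 1 + i))) atTop (nhds (2 ^ K)) := by
    have : Tendsto (fun m : ℕ => ∏ i ∈ Finset.range K,
        ((2 * (m : ℝ) + i) / ((m : ℝ) + 1 + i))) atTop
        (nhds (∏ _i ∈ Finset.range K, (2 : ℝ))) := by
      refine tendsto_finset_prod _ fun i _ => ?_
      have := ratLim 2 (i : ℝ) (1 + i) (by positivity)
      refine this.congr fun m => ?_
      ring_nf
    simpa using this
  have hP : Tendsto (fun m : ℕ => ∏ i ∈ Finset.range K, ((m : ℝ) + 1 + i)) atTop atTop := by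
    refine tendsto_atTop_mono (fun m => ?_)
      (tendsto_atTop_add_const_right atTop 1 tendsto_natCast_atTop_atTop)
    rw [hK, Finset.prod_range_succ']
    have h1 : (1 : ℝ) ≤ ∏ i ∈ Finset.range j, ((m : ℝ) + 1 + ((i + 1 : ℕ) : ℝ)) := by
      have := Finset.prod_le_prod (s := Finset.range j)
        (f := fun _ : ℕ => (1 : ℝ)) (g := fun i : ℕ => ((m : ℝ) + 1 + ((i + 1 : ℕ) : ℝ)))
        (fun i _ => zero_le_one) (fun i _ => by
          show (1 : ℝ) ≤ (m : ℝ) + 1 + ((i + 1 : ℕ) : ℝ)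
          have hm0 : (0 : ℝ) ≤ (m : ℝ) := Nat.cast_nonneg m
          have hi0 : (0 : ℝ) ≤ ((i + 1 : ℕ) : ℝ) := Nat.cast_nonneg _
          linarith)
      simpa using this
    have h2 : (0 : ℝ) ≤ (m : ℝ) + 1 + ((0 : ℕ) : ℝ) := by positivity
    calc ((m : ℝ) + 1) = 1 * ((m : ℝ) + 1 + ((0 : ℕ) : ℝ)) := by norm_num
    _ ≤ (∏ i ∈ Finset.range j, ((m : ℝ) + 1 + ((i + 1 : ℕ) : ℝ))) * ((m : ℝ) + 1 + ((0 : ℕ) : ℝ)) :=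
        mul_le_mul_of_nonneg_right h1 h2
  have hE : Tendsto (fun m : ℕ =>
      (K.factorial : ℝ) / ∏ i ∈ Finset.range K, ((m : ℝ) + 1 + i)) atTop (nhds 0) :=
    Tendsto.div_atTop tendsto_const_nhds hP
  -- the combined limit
  have hnum : Tendsto (fun m : ℕ =>
      ((j + 2 : ℕ) : ℝ) * ((∏ i ∈ Finset.range K, (((m : ℝ) + i) / ((m : ℝ) + 1 + i))) + 1)
        + (∏ i ∈ Finset.range K, ((2 * (m : ℝ) + i) / ((m : ℝ) + 1 + i)))
        + (K.factorial : ℝ) / ∏ i ∈ Finset.range K, ((m : ℝ) + 1 + i)) atTop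
      (nhds (((j + 2 : ℕ) : ℝ) * (1 + 1) + 2 ^ K + 0)) :=
    (((hQ1.add tendsto_const_nhds).const_mul _).add hQ3).add hE
  have hden : Tendsto (fun m : ℕ =>
      1 + ((j + 2 : ℕ) : ℝ) *
        ((K.factorial : ℝ) / ∏ i ∈ Finset.range K, ((m : ℝ) + 1 + i))) atTop
      (nhds (1 + ((j + 2 : ℕ) : ℝ) * 0)) :=
    tendsto_const_nhds.add (hE.const_mul _)
  have hG := hnum.div hden (by norm_num)
  have hval : (((j + 2 : ℕ) : ℝ) * (1 + 1) + 2 ^ K + 0) / (1 + ((j + 2 : ℕ) : ℝ) * 0)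
      = (2 * ((j + 2 : ℕ) : ℝ) + 2 ^ (j + 2 - 1)) := by
    push_cast [hK]
    norm_num
    ring
  rw [hval] at hG
  refine hG.congr' ?_
  filter_upwards [eventually_ge_atTop 1] with m hm
  -- rewrite the choose values as products
  have hm' : (1 : ℝ) ≤ (m : ℝ) := by exact_mod_cast hm
  have h2 : ((Nat.choose (m + (j + 2) - 1) (j + 1) : ℕ) : ℝ) * (K.factorial : ℝ)
      = ∏ i ∈ Finset.range K, ((m : ℝ) + 1 + i) := by
    have : m + (j + 2) - 1 = m + K := by omega
    rw [this, ← hK, choose_cast]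
  have h1 : ((Nat.choose (m + (j + 2) - 2) (j + 1) : ℕ) : ℝ) * (K.factorial : ℝ)
      = ∏ i ∈ Finset.range K, ((m : ℝ) + i) := by
    have heq : m + (j + 2) - 2 = (m - 1) + K := by omega
    rw [heq, ← hK, choose_cast]
    refine Finset.prod_congr rfl fun i _ => ?_
    have : ((m - 1 : ℕ) : ℝ) = (m : ℝ) - 1 := by
      push_cast [hm]
      ring
    rw [this]; ring
  have h3 : ((Nat.choose (2 * m + (j + 2) - 2) (j + 1) : ℕ) : ℝ) * (K.factorial : ℝ)
      = ∏ i ∈ Finset.range K, (2 * (m : ℝ) + i) := by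
    have heq : 2 * m + (j + 2) - 2 = (2 * m - 1) + K := by omega
    rw [heq, ← hK, choose_cast]
    refine Finset.prod_congr rfl fun i _ => ?_
    have : ((2 * m - 1 : ℕ) : ℝ) = 2 * (m : ℝ) - 1 := by
      push_cast [show 1 ≤ 2 * m by omega]
      ring
    rw [this]; ring
  -- abbreviations
  set A := ∏ i ∈ Finset.range K, ((m : ℝ) + i) with hA
  set B := ∏ i ∈ Finset.range K, ((m : ℝ) + 1 + i) with hB
  set C := ∏ i ∈ Finset.range K, (2 * (m : ℝ) + i) with hC
  have hBpos : 0 < B := Finset.prod_pos fun i _ => by positivity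
  have hKf : (0 : ℝ) < (K.factorial : ℝ) := by exact_mod_cast K.factorial_pos
  have hQA : (∏ i ∈ Finset.range K, (((m : ℝ) + i) / ((m : ℝ) + 1 + i))) = A / B := by
    rw [hA, hB, ← Finset.prod_div_distrib]
  have hQC : (∏ i ∈ Finset.range K, ((2 * (m : ℝ) + i) / ((m : ℝ) + 1 + i))) = C / B := by
    rw [hC, hB, ← Finset.prod_div_distrib]
  simp only [Pi.div_apply]
  rw [hQA, hQC]
  -- express the choose casts
  have e1 : ((Nat.choose (m + (j + 2) - 2) (j + 1) : ℕ) : ℝ) = A / (K.factorial : ℝ) := by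
    field_simp [← h1]
    exact h1
  have e2 : ((Nat.choose (m + (j + 2) - 1) (j + 1) : ℕ) : ℝ) = B / (K.factorial : ℝ) := by
    field_simp [← h2]
    exact h2
  have e3 : ((Nat.choose (2 * m + (j + 2) - 2) (j + 1) : ℕ) : ℝ) = C / (K.factorial : ℝ) := by
    field_simp [← h3]
    exact h3
  push_cast
  rw [e1, e2, e3]
  field_simp
  rw [← hB]
  ring
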